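/- In the Artin group A(4,4,2) = ⟨s, t, r | stst = tsts, trtr = rtrt, sr = rs⟩, for every k ≥ 1 and all nonzero integers n_1, …, n_k, the element stsrtr commutes with the element (t^{n_1} s t r)(t^{n_2} s t r) ⋯ (t^{n_k} s t r). In particular, for each such product w, the subgroup ⟨stsrtr, w⟩ of A(4,4,2) is abelian. -/

import Mathlib

namespace A442

/-- The defining relations of the Artin group
`A(4,4,2) = ⟨s, t, r | stst = tsts, trtr = rtrt, sr = rs⟩`,
with `0, 1, 2` playing the roles of `s, t, r`. -/
def rels : Set (FreeGroup (Fin 3)) :=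
  { FreeGroup.of 0 * FreeGroup.of 1 * FreeGroup.of 0 * FreeGroup.of 1 *
      (FreeGroup.of 1 * FreeGroup.of 0 * FreeGroup.of 1 * FreeGroup.of 0)⁻¹,
    FreeGroup.of 1 * FreeGroup.of 2 * FreeGroup.of 1 * FreeGroup.of 2 *
      (FreeGroup.of 2 * FreeGroup.of 1 * FreeGroup.of 2 * FreeGroup.of 1)⁻¹,
    FreeGroup.of 0 * FreeGroup.of 2 * (FreeGroup.of 2 * FreeGroup.of 0)⁻¹ }

/-- The Artin group `A(4,4,2)`. -/
abbrev Grp := PresentedGroup rels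

def s : Grp := PresentedGroup.of 0
def t : Grp := PresentedGroup.of 1
def r : Grp := PresentedGroup.of 2


lemma relhold {w : FreeGroup (Fin 3)} (hw : w ∈ rels) : PresentedGroup.mk rels w = 1 := by
  have : w ∈ Subgroup.normalClosure rels := Subgroup.subset_normalClosure hw
  exact (QuotientGroup.eq_one_iff w).2 this

lemma rel1 : s * t * s * t = t * s * t * s := by
  have := relhold (Set.mem_insert _ _)
  rw [map_mul, map_inv] at this
  simp only [map_mul] at this
  have h := mul_eq_one_iff_eq_inv.1 this
  rw [inv_inv] at h
  exact h

lemma rel2 : t * r * t * r = r * t * r * t := by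
  have := relhold (Set.mem_insert_of_mem _ (Set.mem_insert _ _))
  rw [map_mul, map_inv] at this
  simp only [map_mul] at this
  have h := mul_eq_one_iff_eq_inv.1 this
  rw [inv_inv] at h
  exact h

lemma rel3 : s * r = r * s := by
  have := relhold (Set.mem_insert_of_mem _ (Set.mem_insert_of_mem _ rfl))
  rw [map_mul, map_inv] at this
  simp only [map_mul] at this
  have h := mul_eq_one_iff_eq_inv.1 this
  rw [inv_inv] at h
  exact h

lemma z_eq : s * t * s * r * t * r = (s * t * r) * (s * t * r) := by
  symm
  calc (s * t * r) * (s * t * r) = s * t * (r * s) * t * r := by group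
    _ = s * t * (s * r) * t * r := by rw [← rel3]
    _ = s * t * s * r * t * r := by group

lemma z_comm_t : Commute (s * t * s * r * t * r) t := by
  have h1 : t * (s * t * s * r * t * r) = (t*s*t*s) * (r*t*r) := by group
  have h2 : (s * t * s * r * t * r) * t = (s*t*s) * (r*t*r*t) := by group
  rw [Commute, SemiconjBy, h1, h2, ← rel1, ← rel2]
  group

lemma z_comm_str : Commute (s * t * s * r * t * r) (s * t * r) := by
  rw [z_eq]; exact (Commute.refl _).mul_left (Commute.refl _)

end A442

open A442 in
/-- In `A(4,4,2)`, the element `stsrtr` commutes with every product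
`(t^{n₁}str)(t^{n₂}str)⋯(t^{n_k}str)` with all `nᵢ` nonzero; in particular the
subgroup generated by `stsrtr` and such a product is abelian. -/
theorem A442_stsrtr_commutes (k : ℕ) (hk : 1 ≤ k) (n : Fin k → ℤ) (hn : ∀ p, n p ≠ 0) :
    Commute (s * t * s * r * t * r)
      (((List.finRange k).map fun p => t ^ n p * s * t * r).prod) ∧
    IsMulCommutative (Subgroup.closure {s * t * s * r * t * r,
      ((List.finRange k).map fun p => t ^ n p * s * t * r).prod}) := by
  have hc : Commute (s * t * s * r * t * r)
      (((List.finRange k).map fun p => t ^ n p * s * t * r).prod) := by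
    apply Commute.list_prod_right
    intro x hx
    simp only [List.mem_map] at hx
    obtain ⟨p, -, rfl⟩ := hx
    have h1 : Commute (s * t * s * r * t * r) (t ^ n p) := z_comm_t.zpow_right _
    have : t ^ n p * s * t * r = t ^ n p * (s * t * r) := by group
    rw [this]
    exact h1.mul_right z_comm_str
  refine ⟨hc, ⟨⟨fun a b => ?_⟩⟩⟩
  obtain ⟨a, ha⟩ := a; obtain ⟨b, hb⟩ := b
  ext
  show a * b = b * a
  refine Subgroup.closure_induction₂ (fun x y hx hy => ?_)
    (fun x _ => by group) (fun x _ => by group)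
    (fun x y z _ _ _ h1 h2 => by rw [mul_assoc, h2, ← mul_assoc, h1, mul_assoc])
    (fun y z x _ _ _ h1 h2 => by rw [← mul_assoc, h1, mul_assoc, h2, ← mul_assoc])
    (fun x y _ _ h => (Commute.inv_left_iff.2 h))
    (fun x y _ _ h => (Commute.inv_right_iff.2 h)) ha hb
  rcases hx with rfl | rfl <;> rcases hy with rfl | rfl
  · rfl
  · simp_all; exact hc
  · simp_all; exact hc.symm
  · simp_all
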